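/- Let f ∈ ℂ[z] be a polynomial in one variable whose coefficients lie in a bounded set and whose leading behavior is controlled as follows: f = g + h where all coefficients of h have absolute value < ε and g has some coefficient of absolute value ≥ δ in positive degree. If a ∈ ℂ satisfies g(a)/δ arbitrarily small, then f has a root within distance o(1) of a as ε → 0. Formally (standard form of the Robinson–Callot argument): for every δ > 0, M > 0 and η > 0 there exists ε > 0 such that for every polynomial f of degree ≤ n with all coefficients of absolute value ≤ M, and every a with |a| ≤ M and |f(a)| ≤ ε, if some coefficient of f in positive degree has absolute value ≥ δ, then f has a root b with |b − a| ≤ η. -/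

import Mathlib

open Polynomial

private lemma choose_le_two_pow' (m k : ℕ) : m.choose k ≤ 2 ^ m := by
  rcases le_or_gt k m with h | h
  · calc m.choose k ≤ ∑ i ∈ Finset.range (m + 1), m.choose i :=
        Finset.single_le_sum (fun i _ => Nat.zero_le _)
          (Finset.mem_range.2 (Nat.lt_succ_of_le h))
    _ = 2 ^ m := Nat.sum_range_choose m
  · simp [Nat.choose_eq_zero_of_lt h]

private lemma pow_card_le_prod_of_nonneg {s : Multiset ℝ} {a : ℝ} (ha : 0 ≤ a)
    (h : ∀ x ∈ s, a ≤ x) : a ^ Multiset.card s ≤ s.prod := by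
  induction s using Multiset.induction with
  | empty => simp
  | cons x t ih =>
    rw [Multiset.prod_cons, Multiset.card_cons, pow_succ']
    have hx := h x (Multiset.mem_cons_self _ _)
    have ht := ih (fun y hy => h y (Multiset.mem_cons_of_mem hy))
    have hapow : (0:ℝ) ≤ a ^ Multiset.card t := by positivity
    exact mul_le_mul hx ht hapow (le_trans ha hx)

private lemma multiset_prod_nonneg {s : Multiset ℝ} (h : ∀ x ∈ s, 0 ≤ x) : 0 ≤ s.prod := by
  induction s using Multiset.induction with
  | empty => simp
  | cons x t ih =>
    rw [Multiset.prod_cons]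
    exact mul_nonneg (h x (Multiset.mem_cons_self _ _))
      (ih fun y hy => h y (Multiset.mem_cons_of_mem hy))

private lemma norm_mprod (s : Multiset ℂ) : ‖s.prod‖ = (s.map (fun x => ‖x‖)).prod :=
  map_multiset_prod (normHom (α := ℂ)) s

/-- Standard (ε–δ) form of the Robinson–Callot argument in one variable: for every
`δ, M, η > 0` there is `ε > 0` such that every polynomial `f ∈ ℂ[z]` of degree at most
`n`, with all coefficients of absolute value at most `M` and some coefficient in positive
degree of absolute value at least `δ`, which is `ε`-small at a point `a` with `|a| ≤ M`,
has a root `b` with `|b - a| ≤ η`. -/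
theorem root_near_almost_zero (n : ℕ) :
    ∀ δ M η : ℝ, 0 < δ → 0 < M → 0 < η →
      ∃ ε : ℝ, 0 < ε ∧
        ∀ f : Polynomial ℂ, f.natDegree ≤ n →
          (∀ i : ℕ, ‖f.coeff i‖ ≤ M) →
          (∃ i : ℕ, 0 < i ∧ δ ≤ ‖f.coeff i‖) →
          ∀ a : ℂ, ‖a‖ ≤ M → ‖f.eval a‖ ≤ ε →
            ∃ b : ℂ, f.eval b = 0 ∧ ‖b - a‖ ≤ η := by
  intro δ M η hδ hM hη
  set M' : ℝ := max M 1 with hM'def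
  set c : ℝ := max 1 η⁻¹ with hcdef
  have hM'1 : (1:ℝ) ≤ M' := le_max_right _ _
  have hc1 : (1:ℝ) ≤ c := le_max_left _ _
  set K : ℝ := (n + 1) * 2 ^ n * M' ^ n with hKdef
  set L : ℝ := 2 ^ n * c ^ n with hLdef
  have hK0 : 0 < K := by positivity
  have hL0 : 0 < L := by positivity
  refine ⟨δ / (2 * K * L), by positivity, ?_⟩
  rintro f hdeg hcoeff ⟨i, hi0, hδi⟩ a ha hfa
  set g : Polynomial ℂ := Polynomial.taylor a f with hgdef
  have hgdeg : g.natDegree = f.natDegree := natDegree_taylor f a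
  have hgn : g.natDegree ≤ n := hgdeg ▸ hdeg
  have hfg : ∀ k, f.coeff k = (Polynomial.hasseDeriv k g).eval (-a) := by
    intro k
    have h1 : Polynomial.taylor (-a) g = f := by
      rw [hgdef, taylor_taylor, neg_add_cancel, taylor_zero]
    rw [← h1, taylor_coeff]
  -- Step 1: some coefficient of g in positive degree is at least δ / K.
  have key : ∃ j, 1 ≤ j ∧ δ / K ≤ ‖g.coeff j‖ := by
    by_contra hcon
    push_neg at hcon
    have hPd : (Polynomial.hasseDeriv i g).natDegree < n + 1 :=
      Nat.lt_succ_of_le (((natDegree_hasseDeriv_le g i).trans (Nat.sub_le _ _)).trans hgn)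
    have hbound : ‖f.coeff i‖ < δ := by
      rw [hfg i, eval_eq_sum_range' hPd (-a)]
      calc ‖∑ k ∈ Finset.range (n + 1),
              (Polynomial.hasseDeriv i g).coeff k * (-a) ^ k‖
          ≤ ∑ k ∈ Finset.range (n + 1),
              ‖(Polynomial.hasseDeriv i g).coeff k * (-a) ^ k‖ :=
            norm_sum_le _ _
        _ < ∑ _k ∈ Finset.range (n + 1), 2 ^ n * (δ / K) * M' ^ n := by
            apply Finset.sum_lt_sum_of_nonempty (by simp)
            intro k _hk
            rw [Polynomial.hasseDeriv_coeff]
            rcases le_or_gt (k + i) n with hkin | hkin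
            · have habs : ‖(((k + i).choose i : ℕ) : ℂ) * g.coeff (k + i) * (-a) ^ k‖
                  = ((k + i).choose i : ℝ) * ‖g.coeff (k + i)‖
                      * ‖a‖ ^ k := by
                rw [norm_mul, norm_mul, norm_pow, norm_neg, Complex.norm_natCast]
              rw [habs]
              have h1 : (((k + i).choose i : ℕ) : ℝ) ≤ 2 ^ n := by
                calc (((k + i).choose i : ℕ) : ℝ) ≤ ((2 ^ (k + i) : ℕ) : ℝ) := by
                      exact_mod_cast choose_le_two_pow' (k + i) i
                  _ ≤ 2 ^ n := by
                      rw [Nat.cast_pow]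
                      exact pow_le_pow_right₀ (by norm_num) hkin
              have h2 : ‖g.coeff (k + i)‖ < δ / K :=
                hcon (k + i) (le_add_of_nonneg_of_le (Nat.zero_le k) hi0)
              have h3 : ‖a‖ ^ k ≤ M' ^ n := by
                calc ‖a‖ ^ k ≤ M' ^ k :=
                      pow_le_pow_left₀ (norm_nonneg a) (ha.trans (le_max_left _ _)) k
                  _ ≤ M' ^ n := pow_le_pow_right₀ hM'1 (by omega)
              calc (((k + i).choose i : ℕ) : ℝ) * ‖g.coeff (k + i)‖
                      * ‖a‖ ^ k
                  ≤ 2 ^ n * ‖g.coeff (k + i)‖ * M' ^ n := by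
                    gcongr
                _ < 2 ^ n * (δ / K) * M' ^ n := by
                    rw [mul_right_comm, mul_right_comm ((2:ℝ) ^ n) (δ / K)]
                    exact mul_lt_mul_of_pos_left h2 (by positivity)
            · have hz : g.coeff (k + i) = 0 :=
                coeff_eq_zero_of_natDegree_lt (lt_of_le_of_lt hgn hkin)
              rw [hz]
              simpa using by positivity
        _ = (n + 1) * (2 ^ n * (δ / K) * M' ^ n) := by
            rw [Finset.sum_const, Finset.card_range, nsmul_eq_mul]
            push_cast; ring
        _ = δ := by
            rw [hKdef]; field_simp
    exact absurd hδi (not_le.2 hbound)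
  obtain ⟨j, hj1, hjδ⟩ := key
  have hδK : 0 < δ / K := by positivity
  have hgj : g.coeff j ≠ 0 := by
    intro h; rw [h] at hjδ; simp at hjδ; linarith
  have hjm : j ≤ g.natDegree := le_natDegree_of_ne_zero hgj
  have hg0 : g ≠ 0 := fun h => hgj (by simp [h])
  have hsplit : Splits g := IsAlgClosed.splits g
  have hcard : Multiset.card g.roots = g.natDegree := (splits_iff_card_roots).1 hsplit
  by_cases hroot : ∃ r ∈ g.roots, ‖r‖ ≤ η
  · obtain ⟨r, hr, hrη⟩ := hroot
    refine ⟨r + a, ?_, by simpa using hrη⟩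
    have hgr : g.eval r = 0 := (mem_roots hg0).1 hr
    have h2 : (Polynomial.taylor a f).eval r = f.eval (r + a) := taylor_eval a f r
    rw [← h2]
    exact hgr
  · exfalso
    push_neg at hroot
    set P : ℝ := (g.roots.map (fun x => ‖x‖)).prod with hPdef
    -- |g.eval 0| = |leadingCoeff| * P
    have hgeval : ‖g.eval 0‖ = ‖g.leadingCoeff‖ * P := by
      conv_lhs => rw [hsplit.eq_prod_roots]
      rw [eval_mul, eval_C, norm_mul, eval_multiset_prod, Multiset.map_map,
        norm_mprod, Multiset.map_map]
      congr 2
      apply Multiset.map_congr rfl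
      intro r _
      simp
    -- bound |esymm|
    have hesymm : ‖g.roots.esymm (g.natDegree - j)‖ ≤ 2 ^ n * (c ^ n * P) := by
      rw [Multiset.esymm]
      calc ‖(Multiset.map Multiset.prod
              (g.roots.powersetCard (g.natDegree - j))).sum‖
          ≤ (Multiset.map (fun S => ‖S.prod‖)
              (g.roots.powersetCard (g.natDegree - j))).sum := by
            simpa [Multiset.map_map, Function.comp] using
              norm_multiset_sum_le (Multiset.map Multiset.prod
                (g.roots.powersetCard (g.natDegree - j)))
        _ ≤ Multiset.card (Multiset.map (fun S => ‖S.prod‖)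
              (g.roots.powersetCard (g.natDegree - j))) • (c ^ n * P) := by
            apply Multiset.sum_le_card_nsmul
            intro x hx
            obtain ⟨S, hS, rfl⟩ := Multiset.mem_map.1 hx
            obtain ⟨hSle, hScard⟩ := Multiset.mem_powersetCard.1 hS
            have hprodeq : ‖S.prod‖ = (S.map (fun x => ‖x‖)).prod :=
              norm_mprod S
            have hsplit' : ((g.roots - S).map (fun x => ‖x‖)).prod
                * (S.map (fun x => ‖x‖)).prod = P := by
              rw [← Multiset.prod_add, ← Multiset.map_add, tsub_add_cancel_of_le hSle]
            have hcardsub : Multiset.card (g.roots - S) = j := by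
              rw [Multiset.card_sub hSle, hScard, hcard]
              omega
            have hηpow : η ^ j ≤ ((g.roots - S).map (fun x => ‖x‖)).prod := by
              have := pow_card_le_prod_of_nonneg (s := (g.roots - S).map (fun x => ‖x‖))
                (a := η) hη.le ?_
              · rwa [Multiset.card_map, hcardsub] at this
              · intro x hx
                obtain ⟨r, hr, rfl⟩ := Multiset.mem_map.1 hx
                exact le_of_lt (hroot r (Multiset.mem_of_le (Multiset.sub_le_self _ _) hr))
            have hSnonneg : 0 ≤ (S.map (fun x => ‖x‖)).prod := by
              rw [← hprodeq]; exact norm_nonneg _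
            have hkey : (S.map (fun x => ‖x‖)).prod * η ^ j ≤ P := by
              calc (S.map (fun x => ‖x‖)).prod * η ^ j
                  ≤ (S.map (fun x => ‖x‖)).prod * ((g.roots - S).map (fun x => ‖x‖)).prod := by
                    gcongr
                _ = P := by rw [mul_comm]; exact hsplit'
            have hstep : (S.map (fun x => ‖x‖)).prod ≤ P / η ^ j :=
              (le_div_iff₀ (by positivity)).2 hkey
            have hPnonneg : 0 ≤ P := by
              calc (0:ℝ) ≤ (S.map (fun x => ‖x‖)).prod * η ^ j := by positivity
                _ ≤ P := hkey
            calc ‖S.prod‖ ≤ P / η ^ j := hprodeq ▸ hstep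
              _ = P * (η⁻¹) ^ j := by rw [div_eq_mul_inv, inv_pow]
              _ ≤ P * c ^ j := by
                  gcongr
                  exact le_max_right _ _
              _ ≤ P * c ^ n := by
                  gcongr
                  · exact hjm.trans hgn
              _ = c ^ n * P := mul_comm _ _
        _ ≤ 2 ^ n * (c ^ n * P) := by
            rw [Multiset.card_map, Multiset.card_powersetCard, hcard, nsmul_eq_mul]
            have hchoose : ((g.natDegree.choose (g.natDegree - j) : ℕ) : ℝ) ≤ 2 ^ n := by
              calc ((g.natDegree.choose (g.natDegree - j) : ℕ) : ℝ)
                  ≤ ((2 ^ g.natDegree : ℕ) : ℝ) := by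
                    exact_mod_cast choose_le_two_pow' g.natDegree (g.natDegree - j)
                _ ≤ 2 ^ n := by
                    rw [Nat.cast_pow]
                    exact pow_le_pow_right₀ (by norm_num) hgn
            have hcP : 0 ≤ c ^ n * P := by
              have hP0 : 0 ≤ P := multiset_prod_nonneg (by
                intro x hx
                obtain ⟨r, _, rfl⟩ := Multiset.mem_map.1 hx
                exact norm_nonneg r)
              positivity
            exact mul_le_mul_of_nonneg_right hchoose hcP
    -- coefficient formula
    have hcoeffj : ‖g.coeff j‖
        = ‖g.leadingCoeff‖ * ‖g.roots.esymm (g.natDegree - j)‖ := by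
      rw [coeff_eq_esymm_roots_of_card hcard hjm, norm_mul, norm_mul, norm_pow,
        norm_neg, norm_one, one_pow, mul_one]
    have hfinal : ‖g.coeff j‖ ≤ L * ‖f.eval a‖ := by
      have hga : g.eval 0 = f.eval a := by
        rw [hgdef, taylor_eval, zero_add]
      rw [hcoeffj, ← hga, hgeval]
      calc ‖g.leadingCoeff‖ * ‖g.roots.esymm (g.natDegree - j)‖
          ≤ ‖g.leadingCoeff‖ * (2 ^ n * (c ^ n * P)) := by
            gcongr
        _ = L * (‖g.leadingCoeff‖ * P) := by rw [hLdef]; ring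
    have : δ / K ≤ L * (δ / (2 * K * L)) := hjδ.trans (hfinal.trans (by gcongr))
    have heq : L * (δ / (2 * K * L)) = δ / (2 * K) := by field_simp
    rw [heq] at this
    have : δ / (2 * K) < δ / K := by
      apply div_lt_div_of_pos_left hδ hK0
      linarith
    linarith
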